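/- Fix i and let Ā_{ii} ∈ ℝ^{n_i×n_i}, and for j ≠ i let Ā_{ij} ∈ ℝ^{n_i×n_j} and let E_j = {x : H_j x ≤ 1} = {Ξ_j d : ‖d‖_∞ ≤ 1} be zonotopes with H_j of full column rank, left inverse H_j^♭, and ‖H_j Ξ_j‖_∞ = 1. Suppose there is no disturbance term, so that Ψ_i is the horizontal concatenation [Ā_{i j_1} Ξ_{j_1}, …, Ā_{i j_z} Ξ_{j_z}] over the parents j_1,…,j_z of i. If the series defining β_i := Σ_{j≠i} Σ_{k=0}^∞ ‖H_i Ā_{ii}^k Ā_{ij} H_j^♭‖_∞ converges, then γ_i := Σ_{k=0}^∞ ‖H_i Ā_{ii}^k Ψ_i‖_∞ ≤ β_i; in particular β_i < 1 implies γ_i < 1. -/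
import Mathlib


open scoped BigOperators Classical
open Matrix

noncomputable section

/-- Induced infinity norm of a real matrix. -/
def matInfNorm {m n : Type*} [Fintype m] [Fintype n] (A : Matrix m n ℝ) : ℝ :=
  ⨆ i, ∑ j, |A i j|

/-- Infinity norm of a vector. -/
def vecInfNorm {m : Type*} [Fintype m] (v : m → ℝ) : ℝ := ⨆ i, |v i|

/-- The matrix `Ψ i` in the disturbance-free case: horizontal concatenation of the
blocks `Ā_{ij} Ξ j` over the parents `j ≠ i` with `Ā_{ij} ≠ 0`. -/
def PsiMat0 {M : ℕ} {n nb : Fin M → ℕ}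
    (A : ∀ i j : Fin M, Matrix (Fin (n i)) (Fin (n j)) ℝ)
    (Ξ : ∀ i, Matrix (Fin (n i)) (Fin (nb i)) ℝ) (i : Fin M) :
    Matrix (Fin (n i)) (Σ j : {j : Fin M // j ≠ i ∧ A i j ≠ 0}, Fin (nb j.1)) ℝ :=
  Matrix.of fun row c => (A i c.1.1 * Ξ c.1.1) row c.2


lemma matInfNorm_nonneg {m n : Type*} [Fintype m] [Fintype n] (A : Matrix m n ℝ) :
    0 ≤ matInfNorm A :=
  Real.iSup_nonneg fun r => Finset.sum_nonneg fun j _ => abs_nonneg _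

lemma rowSum_le_matInfNorm {m n : Type*} [Fintype m] [Fintype n] (A : Matrix m n ℝ) (r : m) :
    ∑ j, |A r j| ≤ matInfNorm A := by
  exact le_ciSup (f := fun r => ∑ j, |A r j|) (Set.Finite.bddAbove (Set.finite_range _)) r

lemma matInfNorm_mul_le {m n p : Type*} [Fintype m] [Fintype n] [Fintype p]
    (A : Matrix m n ℝ) (B : Matrix n p ℝ) :
    matInfNorm (A * B) ≤ matInfNorm A * matInfNorm B := by
  apply Real.iSup_le _ (mul_nonneg (matInfNorm_nonneg A) (matInfNorm_nonneg B))
  intro r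
  calc ∑ j, |(A * B) r j| ≤ ∑ j, ∑ k, |A r k| * |B k j| := by
        refine Finset.sum_le_sum fun j _ => ?_
        rw [Matrix.mul_apply]
        refine (Finset.abs_sum_le_sum_abs _ _).trans ?_
        simp [abs_mul]
    _ = ∑ k, |A r k| * ∑ j, |B k j| := by
        rw [Finset.sum_comm]; simp [Finset.mul_sum]
    _ ≤ ∑ k, |A r k| * matInfNorm B :=
        Finset.sum_le_sum fun k _ =>
          mul_le_mul_of_nonneg_left (rowSum_le_matInfNorm B k) (abs_nonneg _)
    _ = (∑ k, |A r k|) * matInfNorm B := (Finset.sum_mul _ _ _).symm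
    _ ≤ matInfNorm A * matInfNorm B :=
        mul_le_mul_of_nonneg_right (rowSum_le_matInfNorm A r) (matInfNorm_nonneg B)

/-- Remark 2: in the disturbance-free case, convergence of the series defining `β i`
implies that the series defining `γ i` converges with `γ i ≤ β i`; in particular
`β i < 1` implies `γ i < 1`. -/
theorem gamma_le_beta
    (M : ℕ)
    (n τ nb : Fin M → ℕ)
    (A : ∀ i j : Fin M, Matrix (Fin (n i)) (Fin (n j)) ℝ)
    (H : ∀ i, Matrix (Fin (τ i)) (Fin (n i)) ℝ)
    (Hflat : ∀ i, Matrix (Fin (n i)) (Fin (τ i)) ℝ)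
    (Ξ : ∀ i, Matrix (Fin (n i)) (Fin (nb i)) ℝ)
    (E : ∀ i, Set (Fin (n i) → ℝ))
    (hrank : ∀ i, (H i).rank = n i)
    (hleft : ∀ i, Hflat i * H i = 1)
    (hEdual : ∀ i, E i = {x | ∀ t, (H i).mulVec x t ≤ 1})
    (hEgen : ∀ i, E i = {x | ∃ d : Fin (nb i) → ℝ, vecInfNorm d ≤ 1 ∧ x = (Ξ i).mulVec d})
    (hHXi : ∀ i, matInfNorm (H i * Ξ i) = 1)
    (i : Fin M)
    (hbetaSummable : ∀ j, j ≠ i →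
      Summable (fun k : ℕ => matInfNorm (H i * (A i i) ^ k * A i j * Hflat j))) :
    Summable (fun k : ℕ => matInfNorm (H i * (A i i) ^ k * PsiMat0 A Ξ i)) ∧
    ∑' k : ℕ, matInfNorm (H i * (A i i) ^ k * PsiMat0 A Ξ i)
      ≤ ∑ j ∈ Finset.univ.erase i, ∑' k : ℕ,
          matInfNorm (H i * (A i i) ^ k * A i j * Hflat j) := by

  have key : ∀ k : ℕ, matInfNorm (H i * (A i i) ^ k * PsiMat0 A Ξ i) ≤
      ∑ j ∈ Finset.univ.erase i, matInfNorm (H i * (A i i) ^ k * A i j * Hflat j) := by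
    intro k
    set C := H i * (A i i) ^ k with hC
    have hfactor : ∀ j : Fin M,
        matInfNorm (C * (A i j * Ξ j)) ≤ matInfNorm (C * A i j * Hflat j) := by
      intro j
      have h1 : Hflat j * (H j * Ξ j) = Ξ j := by
        rw [← Matrix.mul_assoc, hleft j, Matrix.one_mul]
      have h2 : C * (A i j * Ξ j) = (C * A i j * Hflat j) * (H j * Ξ j) := by
        simp only [Matrix.mul_assoc, h1]
      calc matInfNorm (C * (A i j * Ξ j))
          = matInfNorm ((C * A i j * Hflat j) * (H j * Ξ j)) := by rw [h2]
        _ ≤ matInfNorm (C * A i j * Hflat j) * matInfNorm (H j * Ξ j) :=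
            matInfNorm_mul_le _ _
        _ = matInfNorm (C * A i j * Hflat j) := by rw [hHXi j, mul_one]
    have hsum_nonneg : 0 ≤ ∑ j ∈ Finset.univ.erase i, matInfNorm (C * A i j * Hflat j) :=
      Finset.sum_nonneg fun j _ => matInfNorm_nonneg _
    refine Real.iSup_le (fun r => ?_) hsum_nonneg
    have hsplit : ∑ c, |(C * PsiMat0 A Ξ i) r c|
        = ∑ j' : {j : Fin M // j ≠ i ∧ A i j ≠ 0}, ∑ c2 : Fin (nb j'.1),
            |(C * (A i j'.1 * Ξ j'.1)) r c2| := by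
      rw [← Finset.univ_sigma_univ, Finset.sum_sigma]
      refine Finset.sum_congr rfl fun j' _ => Finset.sum_congr rfl fun c2 _ => rfl
    rw [hsplit]
    have step1 : ∑ j' : {j : Fin M // j ≠ i ∧ A i j ≠ 0}, ∑ c2 : Fin (nb j'.1),
            |(C * (A i j'.1 * Ξ j'.1)) r c2|
        ≤ ∑ j' : {j : Fin M // j ≠ i ∧ A i j ≠ 0}, matInfNorm (C * A i j'.1 * Hflat j'.1) :=
      Finset.sum_le_sum fun j' _ =>
        (rowSum_le_matInfNorm (C * (A i j'.1 * Ξ j'.1)) r).trans (hfactor j'.1)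
    refine step1.trans ?_
    have hsub : ∑ j' : {j : Fin M // j ≠ i ∧ A i j ≠ 0}, matInfNorm (C * A i j'.1 * Hflat j'.1)
        = ∑ j ∈ Finset.univ.filter (fun j => j ≠ i ∧ A i j ≠ 0),
            matInfNorm (C * A i j * Hflat j) :=
      by
        refine (Finset.sum_subtype (Finset.univ.filter fun j => j ≠ i ∧ A i j ≠ 0) ?_
          fun j => matInfNorm (C * A i j * Hflat j)).symm
        intro x; simp
    rw [hsub]
    refine Finset.sum_le_sum_of_subset_of_nonneg ?_ (fun j _ _ => matInfNorm_nonneg _)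
    intro j hj
    simp only [Finset.mem_filter] at hj
    exact Finset.mem_erase.mpr ⟨hj.2.1, Finset.mem_univ j⟩
  have hg : Summable (fun k : ℕ => ∑ j ∈ Finset.univ.erase i,
      matInfNorm (H i * (A i i) ^ k * A i j * Hflat j)) :=
    summable_sum fun j hj => hbetaSummable j (Finset.ne_of_mem_erase hj)
  have hS : Summable (fun k : ℕ => matInfNorm (H i * (A i i) ^ k * PsiMat0 A Ξ i)) :=
    Summable.of_nonneg_of_le (fun k => matInfNorm_nonneg _) key hg
  refine ⟨hS, ?_⟩
  calc ∑' k : ℕ, matInfNorm (H i * (A i i) ^ k * PsiMat0 A Ξ i)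
      ≤ ∑' k : ℕ, ∑ j ∈ Finset.univ.erase i,
          matInfNorm (H i * (A i i) ^ k * A i j * Hflat j) := Summable.tsum_le_tsum key hS hg
    _ = ∑ j ∈ Finset.univ.erase i, ∑' k : ℕ,
          matInfNorm (H i * (A i i) ^ k * A i j * Hflat j) :=
        Summable.tsum_finsetSum fun j hj => hbetaSummable j (Finset.ne_of_mem_erase hj)
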